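/- Let α = (√5 - 1)/2. There exist monic real polynomials a(x), b(x) with a(0) = b(0) = 1, all coefficients of a and b lying in the interval [-α, 1+α], at least one coefficient of b not in {0,1}, such that a(x)b(x) is a 0-1 polynomial. -/
import Mathlib


open Polynomial

theorem exists_alpha_unfair :
    ∃ a b : ℝ[X], a.Monic ∧ b.Monic ∧ a.coeff 0 = 1 ∧ b.coeff 0 = 1 ∧
      (∀ n, a.coeff n ∈ Set.Icc (-((Real.sqrt 5 - 1) / 2)) (1 + (Real.sqrt 5 - 1) / 2)) ∧
      (∀ n, b.coeff n ∈ Set.Icc (-((Real.sqrt 5 - 1) / 2)) (1 + (Real.sqrt 5 - 1) / 2)) ∧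
      (∃ n, b.coeff n ≠ 0 ∧ b.coeff n ≠ 1) ∧
      (∀ n, (a * b).coeff n = 0 ∨ (a * b).coeff n = 1) := by
  have h5 : Real.sqrt 5 ^ 2 = 5 := Real.sq_sqrt (by norm_num)
  have h5lb : (2:ℝ) < Real.sqrt 5 := by nlinarith [Real.sqrt_nonneg 5]
  have h5ub : Real.sqrt 5 < 3 := by nlinarith [Real.sqrt_nonneg 5]
  set s : ℝ := (1 - Real.sqrt 5) / 2 with hs_def
  have hs : s ^ 2 = s + 1 := by rw [hs_def]; nlinarith
  refine ⟨X ^ 2 + C s * X + 1,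
          X ^ 4 - C s * X ^ 3 + (1 + C s) * X ^ 2 - C s * X + 1, ?_, ?_, ?_, ?_, ?_, ?_, ?_, ?_⟩
  · monicity!
  · monicity!
  · simp
  · simp
  · intro n
    constructor <;>
    · match n with
      | 0 => simp [coeff_one]; nlinarith
      | 1 => simp [coeff_one]; nlinarith
      | 2 => simp [coeff_one]; nlinarith
      | (n+3) =>
        simp [coeff_one, coeff_X, Nat.succ_ne_zero]
        nlinarith
  · intro n
    constructor <;>
    · match n with
      | 0 => simp [coeff_one, add_mul, coeff_X_pow]; nlinarith
      | 1 => simp [coeff_one, add_mul, coeff_X_pow]; nlinarith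
      | 2 => simp [coeff_one, add_mul, coeff_X_pow]; nlinarith
      | 3 => simp [coeff_one, add_mul, coeff_X_pow]; nlinarith
      | 4 => simp [coeff_one, add_mul, coeff_X_pow]; nlinarith
      | (n+5) =>
        simp [coeff_one, coeff_X, add_mul, coeff_X_pow, Nat.succ_ne_zero]
        nlinarith
  · refine ⟨1, ?_, ?_⟩ <;> simp [coeff_one, add_mul, coeff_X_pow] <;> nlinarith
  · have hCs : (C s : ℝ[X]) ^ 2 = C s + 1 := by
      rw [← C_pow, hs]; simp
    have key : (X ^ 2 + C s * X + 1) * (X ^ 4 - C s * X ^ 3 + (1 + C s) * X ^ 2 - C s * X + 1)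
        = X ^ 6 + X ^ 4 + X ^ 3 + X ^ 2 + 1 := by
      linear_combination (hCs) * (X ^ 3 - X ^ 4 - X ^ 2 : ℝ[X])
    rw [key]
    intro n
    match n with
    | 0 => simp
    | 1 => simp [coeff_one]
    | 2 => simp [coeff_one]
    | 3 => simp [coeff_one]
    | 4 => simp [coeff_one]
    | 5 => simp [coeff_one]
    | 6 => simp [coeff_one]
    | (n+7) => left; simp [coeff_one, coeff_X_pow]
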